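/- For every closed set K ⊆ ℝⁿ and norm φ, the function ρ_K^φ(x) = sup{s ∈ ℝ : δ_K^φ(a + s(x − a)) = s δ_K^φ(x)} (where a ∈ ξ_K^φ(x)) is upper semicontinuous on ℝⁿ \ K. -/

import Mathlib

open Set Filter Metric MeasureTheory Topology ENNReal

noncomputable section

abbrev Euc (n : ℕ) := EuclideanSpace ℝ (Fin n)

def IsNorm {n : ℕ} (φ : Euc n → ℝ) : Prop :=
  (∀ x, φ x = 0 ↔ x = 0) ∧ (∀ (c : ℝ) (x : Euc n), φ (c • x) = |c| * φ x) ∧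
    (∀ x y, φ (x + y) ≤ φ x + φ y)

def StrictlyConvexNorm {n : ℕ} (φ : Euc n → ℝ) : Prop :=
  IsNorm φ ∧ ∀ a b, φ (a + b) = φ a + φ b → φ b • a = φ a • b

def UniformlyConvexNorm {n : ℕ} (φ : Euc n → ℝ) : Prop :=
  IsNorm φ ∧ ∃ γ : ℝ, 0 < γ ∧ ConvexOn ℝ Set.univ (fun x => φ x - γ * ‖x‖)

def distφ {n : ℕ} (φ : Euc n → ℝ) (K : Set (Euc n)) (x : Euc n) : ℝ :=
  sInf {r | ∃ y ∈ K, r = φ (x - y)}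

def nearφ {n : ℕ} (φ : Euc n → ℝ) (K : Set (Euc n)) (x : Euc n) : Set (Euc n) :=
  {a ∈ K | φ (x - a) = distφ φ K x}

def rhoφ {n : ℕ} (φ : Euc n → ℝ) (K : Set (Euc n)) (x : Euc n) : ℝ≥0∞ :=
  sSup {r : ℝ≥0∞ | ∃ s : ℝ, ∃ a ∈ nearφ φ K x,
    r = ENNReal.ofReal s ∧ distφ φ K (a + s • (x - a)) = s * distφ φ K x}

def normalBundle {n : ℕ} (φ : Euc n → ℝ) (K : Set (Euc n)) : Set (Euc n × Euc n) :=
  {p | p.1 ∈ K ∧ φ p.2 = 1 ∧ ∃ s : ℝ, 0 < s ∧ distφ φ K (p.1 + s • p.2) = s}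

def reachφ {n : ℕ} (φ : Euc n → ℝ) (K : Set (Euc n)) (p : Euc n × Euc n) : ℝ≥0∞ :=
  sSup {r : ℝ≥0∞ | ∃ s : ℝ, 0 < s ∧ r = ENNReal.ofReal s ∧ distφ φ K (p.1 + s • p.2) = s}

def cutLocus {n : ℕ} (φ : Euc n → ℝ) (K : Set (Euc n)) : Set (Euc n) :=
  {x | ∃ p ∈ normalBundle φ K, reachφ φ K p ≠ ⊤ ∧
    x = p.1 + (reachφ φ K p).toReal • p.2}

def PtTwiceDiffAt {n : ℕ} (f : Euc n → ℝ) (x : Euc n) : Prop :=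
  ∃ (L : Euc n →L[ℝ] ℝ) (Q : Euc n →L[ℝ] Euc n →L[ℝ] ℝ),
    Tendsto (fun y => |f y - f x - L (y - x) - Q (y - x) (y - x)| / ‖y - x‖ ^ 2)
      (𝓝[≠] x) (𝓝 0)

namespace Stmt6Aux

variable {n : ℕ} {φ : Euc n → ℝ} {K : Set (Euc n)}

lemma phi_zero (hφ : IsNorm φ) : φ 0 = 0 := (hφ.1 0).2 rfl

lemma phi_neg (hφ : IsNorm φ) (x : Euc n) : φ (-x) = φ x := by
  have h := hφ.2.1 (-1) x
  simpa using h

lemma phi_nonneg (hφ : IsNorm φ) (x : Euc n) : 0 ≤ φ x := by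
  have h := hφ.2.2 x (-x)
  rw [add_neg_cancel, phi_zero hφ, phi_neg hφ] at h
  linarith

lemma phi_sub_comm (hφ : IsNorm φ) (x y : Euc n) : φ (x - y) = φ (y - x) := by
  rw [← phi_neg hφ (x - y), neg_sub]

lemma abs_coord_le_norm (x : Euc n) (i : Fin n) : |x i| ≤ ‖x‖ := by
  have h1 : inner ℝ (EuclideanSpace.single i (1:ℝ)) x = x i := by
    rw [EuclideanSpace.inner_single_left]; simp
  have h2 := abs_real_inner_le_norm (EuclideanSpace.single i (1:ℝ)) x
  rw [h1, EuclideanSpace.norm_single] at h2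
  simpa using h2

lemma phi_upper (hφ : IsNorm φ) : ∃ C > 0, ∀ x, φ x ≤ C * ‖x‖ := by
  set e : Fin n → Euc n := fun i => EuclideanSpace.single i (1 : ℝ) with he
  refine ⟨(∑ i, φ (e i)) + 1,
    add_pos_of_nonneg_of_pos (Finset.sum_nonneg fun i _ => phi_nonneg hφ _) one_pos,
    fun x => ?_⟩
  have hx : x = ∑ i, x i • e i := by
    ext j
    simp [he, EuclideanSpace.single_apply, Pi.single_apply]
  calc φ x = φ (∑ i, x i • e i) := by rw [← hx]
    _ ≤ ∑ i, φ (x i • e i) := Finset.le_sum_of_subadditive φ (phi_zero hφ).le hφ.2.2 _ _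
    _ = ∑ i, |x i| * φ (e i) := by simp [hφ.2.1]
    _ ≤ ∑ i, ‖x‖ * φ (e i) := Finset.sum_le_sum fun i _ =>
        mul_le_mul_of_nonneg_right (abs_coord_le_norm x i) (phi_nonneg hφ _)
    _ = (∑ i, φ (e i)) * ‖x‖ := by rw [← Finset.mul_sum, mul_comm]
    _ ≤ ((∑ i, φ (e i)) + 1) * ‖x‖ :=
        mul_le_mul_of_nonneg_right (by linarith) (norm_nonneg x)

lemma phi_cont (hφ : IsNorm φ) : Continuous φ := by
  obtain ⟨C, hC, hCle⟩ := phi_upper hφ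
  apply LipschitzWith.continuous (K := C.toNNReal) (f := φ)
  apply LipschitzWith.of_dist_le_mul
  intro a b
  rw [Real.dist_eq, dist_eq_norm, Real.coe_toNNReal _ hC.le]
  have h1 : φ a ≤ φ (a - b) + φ b := by
    have := hφ.2.2 (a - b) b; simpa using this
  have h2 : φ b ≤ φ (a - b) + φ a := by
    have := hφ.2.2 (b - a) a
    rw [phi_sub_comm hφ b a] at this
    simpa using this
  have := hCle (a - b)
  rw [abs_le]; constructor <;> linarith

lemma phi_lower (hφ : IsNorm φ) : ∃ C > 0, ∀ x, ‖x‖ ≤ C * φ x := by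
  rcases (sphere (0 : Euc n) 1).eq_empty_or_nonempty with hsph | hsph
  · refine ⟨1, one_pos, fun x => ?_⟩
    have hx : x = 0 := by
      by_contra hx
      have : ‖x‖⁻¹ • x ∈ sphere (0 : Euc n) 1 := by
        simp [norm_smul, abs_inv, inv_mul_cancel₀ (norm_ne_zero_iff.mpr hx)]
      rw [hsph] at this; exact this
    simp [hx, phi_zero hφ]
  · obtain ⟨u, hu, hmin⟩ := (isCompact_sphere (0 : Euc n) 1).exists_isMinOn hsph
      (phi_cont hφ).continuousOn
    have hu1 : ‖u‖ = 1 := by simpa using hu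
    have hm : 0 < φ u := by
      rcases (phi_nonneg hφ u).lt_or_eq with h | h
      · exact h
      · exfalso
        have : u = 0 := (hφ.1 u).1 h.symm
        rw [this] at hu1; simp at hu1
    refine ⟨(φ u)⁻¹, inv_pos.mpr hm, fun x => ?_⟩
    rcases eq_or_ne x 0 with rfl | hx
    · simp [phi_zero hφ]
    · have hxs : ‖x‖⁻¹ • x ∈ sphere (0 : Euc n) 1 := by
        simp [norm_smul, abs_inv, inv_mul_cancel₀ (norm_ne_zero_iff.mpr hx)]
      have h1 : φ u ≤ φ (‖x‖⁻¹ • x) := hmin hxs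
      have h2 : φ (‖x‖⁻¹ • x) = ‖x‖⁻¹ * φ x := by
        rw [hφ.2.1, abs_inv, abs_norm]
      have hnx : 0 < ‖x‖ := norm_pos_iff.mpr hx
      rw [h2] at h1
      have h3 : ‖x‖ * φ u ≤ φ x := by
        have := mul_le_mul_of_nonneg_left h1 hnx.le
        rwa [← mul_assoc, mul_inv_cancel₀ hnx.ne', one_mul] at this
      rw [inv_mul_eq_div, le_div_iff₀ hm]
      linarith


lemma dist_set_nonempty (hKne : K.Nonempty) (x : Euc n) :
    {r | ∃ y ∈ K, r = φ (x - y)}.Nonempty := by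
  obtain ⟨y, hy⟩ := hKne
  exact ⟨φ (x - y), y, hy, rfl⟩

lemma dist_set_bdd (hφ : IsNorm φ) (x : Euc n) :
    BddBelow {r | ∃ y ∈ K, r = φ (x - y)} :=
  ⟨0, fun r hr => by obtain ⟨y, _, rfl⟩ := hr; exact phi_nonneg hφ _⟩

lemma distφ_le (hφ : IsNorm φ) {y : Euc n} (hy : y ∈ K) (x : Euc n) :
    distφ φ K x ≤ φ (x - y) :=
  csInf_le (dist_set_bdd hφ x) ⟨y, hy, rfl⟩

lemma distφ_nonneg (hφ : IsNorm φ) (hKne : K.Nonempty) (x : Euc n) :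
    0 ≤ distφ φ K x :=
  le_csInf (dist_set_nonempty hKne x) fun r hr => by
    obtain ⟨y, _, rfl⟩ := hr; exact phi_nonneg hφ _

lemma distφ_tri (hφ : IsNorm φ) (hKne : K.Nonempty) (p q : Euc n) :
    distφ φ K p ≤ φ (p - q) + distφ φ K q := by
  have h : distφ φ K p - φ (p - q) ≤ distφ φ K q := by
    apply le_csInf (dist_set_nonempty hKne q)
    rintro r ⟨y, hy, rfl⟩
    have h1 := distφ_le hφ hy p
    have h2 := hφ.2.2 (p - q) (q - y)
    rw [sub_add_sub_cancel] at h2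
    linarith
  linarith

lemma distφ_cont (hφ : IsNorm φ) (hKne : K.Nonempty) : Continuous (distφ φ K) := by
  obtain ⟨C, hC, hCle⟩ := phi_upper hφ
  apply LipschitzWith.continuous (K := C.toNNReal) (f := distφ φ K)
  apply LipschitzWith.of_dist_le_mul
  intro p q
  rw [Real.dist_eq, dist_eq_norm, Real.coe_toNNReal _ hC.le]
  have h1 := distφ_tri hφ hKne p q
  have h2 := distφ_tri hφ hKne q p
  rw [phi_sub_comm hφ q p] at h2
  have := hCle (p - q)
  rw [abs_le]; constructor <;> linarith

lemma nearφ_nonempty (hφ : IsNorm φ) (hK : IsClosed K) (hKne : K.Nonempty) (x : Euc n) :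
    (nearφ φ K x).Nonempty := by
  obtain ⟨C, hC, hCle⟩ := phi_lower hφ
  set d := distφ φ K x with hd
  have hd0 : 0 ≤ d := distφ_nonneg hφ hKne x
  have hlt : d < d + 1 := by linarith
  obtain ⟨r, ⟨y₀, hy₀, rfl⟩, hr⟩ :=
    (csInf_lt_iff (dist_set_bdd hφ x) (dist_set_nonempty hKne x)).mp hlt
  set R := C * (d + 1) with hR
  have hy₀' : y₀ ∈ K ∩ closedBall x R := by
    refine ⟨hy₀, ?_⟩
    rw [mem_closedBall, dist_eq_norm, norm_sub_rev]
    calc ‖x - y₀‖ ≤ C * φ (x - y₀) := hCle _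
      _ ≤ R := by rw [hR]; nlinarith
  have hcpt : IsCompact (K ∩ closedBall x R) :=
    (isCompact_closedBall x R).inter_left hK
  obtain ⟨a, ha, hamin⟩ := hcpt.exists_isMinOn ⟨y₀, hy₀'⟩
    ((phi_cont hφ).comp (continuous_const.sub continuous_id)).continuousOn
  refine ⟨a, ha.1, le_antisymm ?_ (distφ_le hφ ha.1 x)⟩
  apply le_csInf (dist_set_nonempty hKne x)
  rintro r ⟨y, hy, rfl⟩
  by_cases hyb : y ∈ closedBall x R
  · exact hamin ⟨hy, hyb⟩
  · have hlow : R < ‖x - y‖ := by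
      rw [mem_closedBall, dist_eq_norm, norm_sub_rev] at hyb
      linarith [not_le.mp hyb]
    have h1 : ‖x - y‖ ≤ C * φ (x - y) := hCle _
    have h2 : φ (x - a) ≤ φ (x - y₀) := hamin hy₀'
    have : d + 1 < φ (x - y) := by
      rw [hR] at hlow
      nlinarith
    linarith

lemma mono_lemma (hφ : IsNorm φ) (hKne : K.Nonempty) {x a : Euc n}
    (ha : a ∈ nearφ φ K x) {s t : ℝ} (h1 : 1 ≤ t) (hts : t ≤ s)
    (hs : distφ φ K (a + s • (x - a)) = s * distφ φ K x) :
    distφ φ K (a + t • (x - a)) = t * distφ φ K x := by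
  set d := distφ φ K x with hd
  have hphi : φ (x - a) = d := ha.2
  have hupper : distφ φ K (a + t • (x - a)) ≤ t * d := by
    have := distφ_le hφ ha.1 (a + t • (x - a))
    rw [add_sub_cancel_left, hφ.2.1, abs_of_nonneg (by linarith : (0:ℝ) ≤ t), hphi] at this
    exact this
  have hlower : t * d ≤ distφ φ K (a + t • (x - a)) := by
    have htri := distφ_tri hφ hKne (a + s • (x - a)) (a + t • (x - a))
    have hsub : (a + s • (x - a)) - (a + t • (x - a)) = (s - t) • (x - a) := by
      rw [sub_smul]; abel
    rw [hsub, hφ.2.1, abs_of_nonneg (by linarith : (0:ℝ) ≤ s - t), hphi, hs] at htri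
    nlinarith
  linarith

end Stmt6Aux


theorem stmt6 {n : ℕ} (φ : Euc n → ℝ) (hφ : StrictlyConvexNorm φ) (K : Set (Euc n))
    (hK : IsClosed K) :
    UpperSemicontinuousOn (rhoφ φ K) Kᶜ := by
  obtain ⟨hN, -⟩ := hφ
  rcases K.eq_empty_or_nonempty with rfl | hKne
  · intro x hx r hr
    have hzero : ∀ z : Euc n, rhoφ φ ∅ z = 0 := by
      intro z
      have hset : {r : ℝ≥0∞ | ∃ s : ℝ, ∃ a ∈ nearφ φ (∅ : Set (Euc n)) z,
          r = ENNReal.ofReal s ∧ distφ φ ∅ (a + s • (z - a)) = s * distφ φ ∅ z} = ∅ := by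
        ext r; simp [nearφ]
      rw [rhoφ, hset, sSup_empty]
      rfl
    rw [hzero x] at hr
    exact Filter.Eventually.of_forall fun z => by show rhoφ φ ∅ z < r; rw [hzero z]; exact hr
  · intro x hx r hr
    by_contra hcon
    rw [Filter.not_eventually] at hcon
    obtain ⟨t, ht0, htl, htr⟩ := ENNReal.lt_iff_exists_real_btwn.mp hr
    have hone : (1 : ℝ≥0∞) ≤ rhoφ φ K x := by
      obtain ⟨a, ha⟩ := Stmt6Aux.nearφ_nonempty hN hK hKne x
      have hw : distφ φ K (a + (1:ℝ) • (x - a)) = 1 * distφ φ K x := by simp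
      calc (1 : ℝ≥0∞) = ENNReal.ofReal 1 := by simp
        _ ≤ rhoφ φ K x := le_sSup ⟨1, a, ha, rfl, hw⟩
    have ht1 : (1:ℝ) < t := by
      have h : (ENNReal.ofReal 1) < ENNReal.ofReal t := by
        rw [ENNReal.ofReal_one]; exact lt_of_le_of_lt hone htl
      exact (ENNReal.ofReal_lt_ofReal_iff_of_nonneg zero_le_one).mp h
    obtain ⟨z, hz, hz2⟩ := Filter.exists_seq_forall_of_frequently hcon
    have hzx : Tendsto z atTop (𝓝 x) := hz.mono_right nhdsWithin_le_nhds
    have key : ∀ k, ∃ a ∈ nearφ φ K (z k),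
        distφ φ K (a + t • (z k - a)) = t * distφ φ K (z k) := by
      intro k
      have h1 : ENNReal.ofReal t < rhoφ φ K (z k) :=
        lt_of_lt_of_le htr (not_lt.mp (hz2 k))
      obtain ⟨e, he, hte⟩ := lt_sSup_iff.mp h1
      obtain ⟨s, a, ha, rfl, hdist⟩ := he
      have hts : t < s := (ENNReal.ofReal_lt_ofReal_iff_of_nonneg ht0).mp hte
      exact ⟨a, ha, Stmt6Aux.mono_lemma hN hKne ha ht1.le hts.le hdist⟩
    choose a ha hda using key
    obtain ⟨C, hC, hCle⟩ := Stmt6Aux.phi_lower hN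
    have hdc : Continuous (distφ φ K) := Stmt6Aux.distφ_cont hN hKne
    have hgt : Tendsto (fun k => ‖z k‖ + C * distφ φ K (z k)) atTop
        (𝓝 (‖x‖ + C * distφ φ K x)) :=
      ((continuous_norm.tendsto x).comp hzx).add
        (((continuous_const.mul hdc).tendsto x).comp hzx)
    obtain ⟨R, hR⟩ := hgt.bddAbove_range
    have haR : ∀ k, a k ∈ closedBall (0 : Euc n) R := by
      intro k
      rw [mem_closedBall, dist_zero_right]
      have h1 : ‖z k - a k‖ ≤ C * distφ φ K (z k) := by
        have h := hCle (z k - a k)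
        rwa [(ha k).2] at h
      have h2 : ‖a k‖ ≤ ‖z k‖ + ‖z k - a k‖ :=
        calc ‖a k‖ = ‖z k - (z k - a k)‖ := by congr 1; abel
          _ ≤ _ := norm_sub_le _ _
      have h3 := hR (Set.mem_range_self k)
      linarith
    obtain ⟨b, hb, ψ, hψ, hconv⟩ :=
      tendsto_subseq_of_bounded (isBounded_closedBall (x := (0:Euc n)) (r := R)) haR
    have hw : Tendsto (fun k => z (ψ k)) atTop (𝓝 x) := hzx.comp hψ.tendsto_atTop
    have hbK : b ∈ K :=
      hK.mem_of_tendsto hconv (Filter.Eventually.of_forall fun k => (ha (ψ k)).1)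
    have hfb : φ (x - b) = distφ φ K x := by
      have l1 : Tendsto (fun k => φ (z (ψ k) - a (ψ k))) atTop (𝓝 (φ (x - b))) :=
        ((Stmt6Aux.phi_cont hN).tendsto _).comp (hw.sub hconv)
      have l2 : Tendsto (fun k => distφ φ K (z (ψ k))) atTop (𝓝 (distφ φ K x)) :=
        (hdc.tendsto _).comp hw
      have heq : (fun k => φ (z (ψ k) - a (ψ k))) = fun k => distφ φ K (z (ψ k)) :=
        funext fun k => (ha (ψ k)).2
      rw [heq] at l1
      exact tendsto_nhds_unique l1 l2
    have hfd : distφ φ K (b + t • (x - b)) = t * distφ φ K x := by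
      have l1 : Tendsto (fun k => distφ φ K (a (ψ k) + t • (z (ψ k) - a (ψ k)))) atTop
          (𝓝 (distφ φ K (b + t • (x - b)))) :=
        (hdc.tendsto _).comp (hconv.add ((hw.sub hconv).const_smul t))
      have l2 : Tendsto (fun k => t * distφ φ K (z (ψ k))) atTop
          (𝓝 (t * distφ φ K x)) :=
        ((hdc.tendsto _).comp hw).const_mul t
      have heq : (fun k => distφ φ K (a (ψ k) + t • (z (ψ k) - a (ψ k)))) =
          fun k => t * distφ φ K (z (ψ k)) := funext fun k => hda (ψ k)
      rw [heq] at l1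
      exact tendsto_nhds_unique l1 l2
    have hle : ENNReal.ofReal t ≤ rhoφ φ K x := le_sSup ⟨t, b, ⟨hbK, hfb⟩, rfl, hfd⟩
    exact absurd htl (not_lt.mpr hle)
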